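/- Cycle-CTL* is strictly more expressive than CTL*: there is no CTL* state formula φ (a Cycle-CTL* formula containing no occurrence of E^cycle or A^cycle) such that for every Kripke structure K, K ⊨ φ if and only if K ⊨ E^cycle ⊤. -/

import Mathlib

namespace CycleCTL

universe u v

/-- A Kripke structure over a set `AP` of atomic propositions. -/
structure Kripke (AP : Type) : Type (u + 1) where
  World : Type u
  init : World
  R : World → World → Prop
  label : World → Set AP
  serial : ∀ w, ∃ v, R w v

variable {AP : Type}

/-- An (infinite) path of a Kripke structure. -/
def IsPath (K : Kripke.{u} AP) (π : ℕ → K.World) : Prop :=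
  ∀ i, K.R (π i) (π (i + 1))

/-- A cycle: a path visiting its first world infinitely often. -/
def IsCycle (K : Kripke.{u} AP) (π : ℕ → K.World) : Prop :=
  IsPath K π ∧ ∀ i, ∃ j, i < j ∧ π j = π 0

mutual
  /-- State formulas of Cycle-CTL*. -/
  inductive StateForm (AP : Type) : Type where
    | atom : AP → StateForm AP
    | not  : StateForm AP → StateForm AP
    | and  : StateForm AP → StateForm AP → StateForm AP
    | or   : StateForm AP → StateForm AP → StateForm AP
    | E    : PathForm AP → StateForm AP
    | A    : PathForm AP → StateForm AP
    | Ec   : PathForm AP → StateForm AP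
    | Ac   : PathForm AP → StateForm AP
  /-- Path formulas of Cycle-CTL*. -/
  inductive PathForm (AP : Type) : Type where
    | state : StateForm AP → PathForm AP
    | not   : PathForm AP → PathForm AP
    | and   : PathForm AP → PathForm AP → PathForm AP
    | or    : PathForm AP → PathForm AP → PathForm AP
    | next  : PathForm AP → PathForm AP
    | untl  : PathForm AP → PathForm AP → PathForm AP
end

mutual
  /-- Satisfaction of a state formula at a world. -/
  def SatS (K : Kripke.{u} AP) : K.World → StateForm AP → Prop
    | w, .atom p => p ∈ K.label w
    | w, .not φ => ¬ SatS K w φ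
    | w, .and φ₁ φ₂ => SatS K w φ₁ ∧ SatS K w φ₂
    | w, .or φ₁ φ₂ => SatS K w φ₁ ∨ SatS K w φ₂
    | w, .E ψ => ∃ π, IsPath K π ∧ π 0 = w ∧ SatP K π 0 ψ
    | w, .A ψ => ∀ π, IsPath K π → π 0 = w → SatP K π 0 ψ
    | w, .Ec ψ => ∃ π, IsCycle K π ∧ π 0 = w ∧ SatP K π 0 ψ
    | w, .Ac ψ => ∀ π, IsCycle K π → π 0 = w → SatP K π 0 ψ
  /-- Satisfaction of a path formula on a path at a position. -/
  def SatP (K : Kripke.{u} AP) : (ℕ → K.World) → ℕ → PathForm AP → Prop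
    | π, i, .state φ => SatS K (π i) φ
    | π, i, .not ψ => ¬ SatP K π i ψ
    | π, i, .and ψ₁ ψ₂ => SatP K π i ψ₁ ∧ SatP K π i ψ₂
    | π, i, .or ψ₁ ψ₂ => SatP K π i ψ₁ ∨ SatP K π i ψ₂
    | π, i, .next ψ => SatP K π (i + 1) ψ
    | π, i, .untl ψ₁ ψ₂ => ∃ k, SatP K π (i + k) ψ₂ ∧ ∀ j < k, SatP K π (i + j) ψ₁
end

/-- `K ⊨ φ` : satisfaction at the initial world. -/
def Sat (K : Kripke.{u} AP) (φ : StateForm AP) : Prop := SatS K K.init φ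

/-- `⊤` as a path formula, abbreviating `p ∨ ¬p`. -/
def topP (p : AP) : PathForm AP := .or (.state (.atom p)) (.not (.state (.atom p)))

/-- `F ψ` abbreviates `⊤ U ψ`. -/
def FP (p : AP) (ψ : PathForm AP) : PathForm AP := .untl (topP p) ψ

/-- `G ψ` abbreviates `¬(⊤ U ¬ψ)`. -/
def GP (p : AP) (ψ : PathForm AP) : PathForm AP := .not (FP p (.not ψ))


mutual
  /-- A CTL* state formula: no occurrence of the cycle quantifiers `E^cycle` / `A^cycle`. -/
  def NoCycS : StateForm AP → Prop
    | .atom _ => True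
    | .not φ => NoCycS φ
    | .and φ₁ φ₂ => NoCycS φ₁ ∧ NoCycS φ₂
    | .or φ₁ φ₂ => NoCycS φ₁ ∧ NoCycS φ₂
    | .E ψ => NoCycP ψ
    | .A ψ => NoCycP ψ
    | .Ec _ => False
    | .Ac _ => False
  /-- A CTL* path formula: no occurrence of the cycle quantifiers. -/
  def NoCycP : PathForm AP → Prop
    | .state φ => NoCycS φ
    | .not ψ => NoCycP ψ
    | .and ψ₁ ψ₂ => NoCycP ψ₁ ∧ NoCycP ψ₂
    | .or ψ₁ ψ₂ => NoCycP ψ₁ ∧ NoCycP ψ₂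
    | .next ψ => NoCycP ψ
    | .untl ψ₁ ψ₂ => NoCycP ψ₁ ∧ NoCycP ψ₂
end

/-- One-world structure with a self-loop. -/
def K1 (AP : Type) : Kripke.{0} AP :=
  ⟨Unit, (), fun _ _ => True, fun _ => ∅, fun _ => ⟨(), trivial⟩⟩

/-- The natural numbers with successor: no cycles. -/
def K2 (AP : Type) : Kripke.{0} AP :=
  ⟨ℕ, 0, fun a b => b = a + 1, fun _ => ∅, fun n => ⟨n + 1, rfl⟩⟩

lemma k2_path (n : ℕ) : IsPath (K2 AP) (fun k => n + k) := by
  intro i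
  show n + (i + 1) = n + i + 1
  omega

lemma k1_path (π : ℕ → Unit) : IsPath (K1 AP) π := fun _ => trivial

mutual
theorem hs (φ : StateForm AP) (h : NoCycS φ) (u : Unit) (n : ℕ) :
    SatS (K1 AP) u φ ↔ SatS (K2 AP) n φ := by
  cases φ with
  | atom p =>
      show p ∈ (∅ : Set AP) ↔ p ∈ (∅ : Set AP)
      rfl
  | not φ =>
      show ¬ _ ↔ ¬ _
      exact not_congr (hs φ h u n)
  | and φ₁ φ₂ =>
      show _ ∧ _ ↔ _ ∧ _
      exact and_congr (hs φ₁ h.1 u n) (hs φ₂ h.2 u n)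
  | or φ₁ φ₂ =>
      show _ ∨ _ ↔ _ ∨ _
      exact or_congr (hs φ₁ h.1 u n) (hs φ₂ h.2 u n)
  | E ψ =>
      show (∃ π, IsPath (K1 AP) π ∧ π 0 = u ∧ SatP (K1 AP) π 0 ψ) ↔
        (∃ π, IsPath (K2 AP) π ∧ π 0 = n ∧ SatP (K2 AP) π 0 ψ)
      constructor
      · rintro ⟨π, hπ, -, hψ⟩
        exact ⟨fun k => n + k, k2_path n, by simp; rfl,
          (hp ψ h π (fun k => n + k) (k2_path n) 0).mp hψ⟩
      · rintro ⟨π, hπ, -, hψ⟩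
        exact ⟨fun _ => (), k1_path _, rfl,
          (hp ψ h (fun _ => ()) π hπ 0).mpr hψ⟩
  | A ψ =>
      show (∀ π, IsPath (K1 AP) π → π 0 = u → SatP (K1 AP) π 0 ψ) ↔
        (∀ π, IsPath (K2 AP) π → π 0 = n → SatP (K2 AP) π 0 ψ)
      constructor
      · intro H π hπ h0
        exact (hp ψ h (fun _ => ()) π hπ 0).mp (H _ (k1_path _) rfl)
      · intro H π hπ h0
        exact (hp ψ h π (fun k => n + k) (k2_path n) 0).mpr
          (H _ (k2_path n) (by simp; rfl))
  | Ec ψ => exact absurd h (by simp [NoCycS])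
  | Ac ψ => exact absurd h (by simp [NoCycS])
theorem hp (ψ : PathForm AP) (h : NoCycP ψ) (π₁ : ℕ → Unit) (π₂ : ℕ → ℕ)
    (h₂ : IsPath (K2 AP) π₂) (i : ℕ) :
    SatP (K1 AP) π₁ i ψ ↔ SatP (K2 AP) π₂ i ψ := by
  cases ψ with
  | state φ =>
      show SatS (K1 AP) (π₁ i) φ ↔ SatS (K2 AP) (π₂ i) φ
      exact hs φ h (π₁ i) (π₂ i)
  | not ψ =>
      show ¬ _ ↔ ¬ _
      exact not_congr (hp ψ h π₁ π₂ h₂ i)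
  | and ψ₁ ψ₂ =>
      show _ ∧ _ ↔ _ ∧ _
      exact and_congr (hp ψ₁ h.1 π₁ π₂ h₂ i) (hp ψ₂ h.2 π₁ π₂ h₂ i)
  | or ψ₁ ψ₂ =>
      show _ ∨ _ ↔ _ ∨ _
      exact or_congr (hp ψ₁ h.1 π₁ π₂ h₂ i) (hp ψ₂ h.2 π₁ π₂ h₂ i)
  | next ψ =>
      show SatP (K1 AP) π₁ (i + 1) ψ ↔ SatP (K2 AP) π₂ (i + 1) ψ
      exact hp ψ h π₁ π₂ h₂ (i + 1)
  | untl ψ₁ ψ₂ =>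
      show (∃ k, SatP (K1 AP) π₁ (i + k) ψ₂ ∧ ∀ j < k, SatP (K1 AP) π₁ (i + j) ψ₁) ↔
        (∃ k, SatP (K2 AP) π₂ (i + k) ψ₂ ∧ ∀ j < k, SatP (K2 AP) π₂ (i + j) ψ₁)
      exact exists_congr fun k =>
        and_congr (hp ψ₂ h.2 π₁ π₂ h₂ (i + k))
          (forall_congr' fun j => imp_congr Iff.rfl (hp ψ₁ h.1 π₁ π₂ h₂ (i + j)))
end

/-- Cycle-CTL* is strictly more expressive than CTL*: no CTL* state formula
(one with no occurrence of `E^cycle` or `A^cycle`) is equivalent, over all Kripke structures,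
to `E^cycle ⊤`. -/
theorem stmt16 {AP : Type} (p : AP) :
    ¬ ∃ φ : StateForm AP, NoCycS φ ∧
        ∀ K : Kripke.{0} AP, (Sat K φ ↔ Sat K (.Ec (topP p))) := by
  rintro ⟨φ, hnc, heq⟩
  have h1 : Sat (K1 AP) (.Ec (topP p)) := by
    refine ⟨fun _ => (), ⟨k1_path _, fun i => ⟨i + 1, by omega, rfl⟩⟩, rfl, ?_⟩
    show SatS (K1 AP) () (.atom p) ∨ ¬ SatS (K1 AP) () (.atom p)
    exact em _
  have h2 : Sat (K2 AP) φ := (hs φ hnc () 0).mp ((heq (K1 AP)).mpr h1)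
  obtain ⟨π, ⟨hπ, hc⟩, h0, -⟩ := (heq (K2 AP)).mp h2
  change ℕ → ℕ at π
  have hπ' : ∀ i, π (i + 1) = π i + 1 := hπ
  have hmono : ∀ k, π k = π 0 + k := by
    intro k
    induction k with
    | zero => rfl
    | succ k ih => rw [hπ' k, ih]; exact rfl
  obtain ⟨j, hj, hj0⟩ := hc 0
  have h1' := hmono j
  rw [hj0] at h1'
  omega

end CycleCTL
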